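/- arXiv:2307.10158 — 5 statements merged into one kernel-verified Lean document; each statement's English description precedes it below -/
import Mathlib

section
/- Let X ∈ ℝ^{n×p}, β ∈ ℝ^p, and let pen be a real-valued polyhedral gauge on ℝ^p (pen(b) = max{⟨u_1,b⟩,…,⟨u_k,b⟩} with u_1 = 0). The following are equivalent: (i) there exist λ > 0 and β̂ ∈ S_{X,λpen}(Xβ) with ∂pen(β̂) = ∂pen(β) (the noiseless recovery condition); (ii) the image under XᵀX of the linear span of C_β intersects ∂pen(β); (iii) the image under XᵀX of the orthogonal complement of the direction space of the affine hull of ∂pen(β) intersects ∂pen(β). -/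
open scoped RealInnerProductSpace

noncomputable section

/-- Convert a plain coordinate vector to an element of Euclidean space. -/
def toEuc {n : ℕ} (v : Fin n → ℝ) : EuclideanSpace ℝ (Fin n) :=
  (WithLp.equiv 2 (Fin n → ℝ)).symm v

/-- The subdifferential of `φ : ℝ^p → ℝ` at `β`:
`∂φ(β) = {s : φ(β) + ⟪s, b − β⟫ ≤ φ(b) for all b}`. -/
def subdiff {p : ℕ} (φ : EuclideanSpace ℝ (Fin p) → ℝ) (β : EuclideanSpace ℝ (Fin p)) :
    Set (EuclideanSpace ℝ (Fin p)) :=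
  {s | ∀ b, φ β + ⟪s, b - β⟫ ≤ φ b}

/-- `S_{X,λpen}(y)`: the set of minimizers of `b ↦ (1/2)‖y − Xb‖₂² + λ·pen(b)`. -/
def Smin {n p : ℕ} (X : Matrix (Fin n) (Fin p) ℝ) (lam : ℝ)
    (pen : EuclideanSpace ℝ (Fin p) → ℝ) (y : EuclideanSpace ℝ (Fin n)) :
    Set (EuclideanSpace ℝ (Fin p)) :=
  {b | ∀ b' : EuclideanSpace ℝ (Fin p), (1/2) * ‖y - toEuc (X.mulVec b)‖^2 + lam * pen b
        ≤ (1/2) * ‖y - toEuc (X.mulVec b')‖^2 + lam * pen b'}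

/-- The row space of a matrix `X`: `{Xᵀz : z ∈ ℝ^n}`. -/
def rowSpace {n p : ℕ} (X : Matrix (Fin n) (Fin p) ℝ) : Set (EuclideanSpace ℝ (Fin p)) :=
  Set.range fun z : EuclideanSpace ℝ (Fin n) => toEuc (X.transpose.mulVec z)

/-- The normal cone of a set `K` at `x`: `{s : ⟪s, b − x⟫ ≤ 0 for all b ∈ K}`. -/
def normalCone' {p : ℕ} (K : Set (EuclideanSpace ℝ (Fin p))) (x : EuclideanSpace ℝ (Fin p)) :
    Set (EuclideanSpace ℝ (Fin p)) :=
  {s | ∀ b ∈ K, ⟪s, b - x⟫ ≤ 0}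

/-- The supremum norm `‖x‖_∞` on Euclidean space. -/
def supNorm {p : ℕ} (x : EuclideanSpace ℝ (Fin p)) : ℝ := ⨆ i, abs (x i)

/-- `F` is an (exposed) face of `P`: `F = {x ∈ P : ⟪a,x⟫ = c}` for some valid inequality
`⟪a,x⟫ ≤ c` of `P`. -/
def IsFace {p : ℕ} (P F : Set (EuclideanSpace ℝ (Fin p))) : Prop :=
  ∃ (a : EuclideanSpace ℝ (Fin p)) (c : ℝ),
    (∀ x ∈ P, ⟪a, x⟫ ≤ c) ∧ F = {x ∈ P | ⟪a, x⟫ = c}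

section Aux
variable {p k : ℕ} (u : Fin (k + 1) → EuclideanSpace ℝ (Fin p))
  (pen : EuclideanSpace ℝ (Fin p) → ℝ)
  (hpen : ∀ x, pen x = Finset.univ.sup' Finset.univ_nonempty fun i => ⟪u i, x⟫)

include hpen

lemma pen_le (i : Fin (k+1)) (x : EuclideanSpace ℝ (Fin p)) : ⟪u i, x⟫ ≤ pen x := by
  rw [hpen]; exact Finset.le_sup' (fun i => ⟪u i, x⟫) (Finset.mem_univ i)

lemma pen_smul (t : ℝ) (ht : 0 ≤ t) (x : EuclideanSpace ℝ (Fin p)) :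
    pen (t • x) = t * pen x := by
  have hcomp : t * (Finset.univ.sup' Finset.univ_nonempty fun i => ⟪u i, x⟫)
      = Finset.univ.sup' Finset.univ_nonempty fun i => t * ⟪u i, x⟫ :=
    Finset.comp_sup'_eq_sup'_comp Finset.univ_nonempty (fun a => t * a)
      (fun a b => mul_max_of_nonneg a b ht)
  rw [hpen, hpen, hcomp]
  exact Finset.sup'_congr _ rfl fun i _ => real_inner_smul_right _ _ _

lemma pen_zero' : pen 0 = 0 := by
  have := pen_smul u pen hpen 0 le_rfl 0
  simpa using this

lemma subdiff_mem_iff (x s : EuclideanSpace ℝ (Fin p)) :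
    s ∈ subdiff pen x ↔ (∀ b, ⟪s, b⟫ ≤ pen b) ∧ ⟪s, x⟫ = pen x := by
  constructor
  · intro h
    have h0 := h 0
    rw [pen_zero' u pen hpen, zero_sub, inner_neg_right] at h0
    have h2 := h ((2:ℝ) • x)
    have hx2 : (2:ℝ) • x - x = x := by
      rw [two_smul]; abel
    rw [pen_smul u pen hpen 2 (by norm_num) x, hx2] at h2
    have heq : ⟪s, x⟫ = pen x := by linarith
    refine ⟨fun b => ?_, heq⟩
    have hb := h b
    rw [inner_sub_right] at hb
    linarith
  · rintro ⟨hK, heq⟩ b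
    rw [inner_sub_right, heq]
    have := hK b
    linarith

lemma active_subdiff (x : EuclideanSpace ℝ (Fin p)) (i : Fin (k+1))
    (hi : ⟪u i, x⟫ = pen x) : u i ∈ subdiff pen x :=
  (subdiff_mem_iff u pen hpen x (u i)).2 ⟨fun b => pen_le u pen hpen i b, hi⟩

lemma pen_convex (x y : EuclideanSpace ℝ (Fin p)) (t : ℝ) (h0 : 0 ≤ t) (h1 : t ≤ 1) :
    pen (x + t • (y - x)) ≤ (1 - t) * pen x + t * pen y := by
  rw [hpen]
  apply Finset.sup'_le
  intro i _
  have hx : ⟪u i, x⟫ ≤ pen x := pen_le u pen hpen i x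
  have hy : ⟪u i, y⟫ ≤ pen y := pen_le u pen hpen i y
  rw [inner_add_right, real_inner_smul_right, inner_sub_right]
  nlinarith

end Aux

section Aux2
variable {p k : ℕ} (u : Fin (k + 1) → EuclideanSpace ℝ (Fin p))
  (pen : EuclideanSpace ℝ (Fin p) → ℝ)
  (hpen : ∀ x, pen x = Finset.univ.sup' Finset.univ_nonempty fun i => ⟪u i, x⟫)
  (β : EuclideanSpace ℝ (Fin p))

include hpen

lemma inner_const_on_subdiff (v : EuclideanSpace ℝ (Fin p))
    (hv : v ∈ ((affineSpan ℝ (subdiff pen β)).direction)ᗮ)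
    (s t : EuclideanSpace ℝ (Fin p)) (hs : s ∈ subdiff pen β) (ht : t ∈ subdiff pen β) :
    ⟪s, v⟫ = ⟪t, v⟫ := by
  have h1 : s - t ∈ (affineSpan ℝ (subdiff pen β)).direction := by
    have := AffineSubspace.vsub_mem_direction (subset_affineSpan ℝ _ hs)
      (subset_affineSpan ℝ _ ht)
    simpa using this
  have h2 := (Submodule.mem_orthogonal _ v).1 hv _ h1
  rw [inner_sub_left] at h2
  linarith

lemma shift_subdiff (v : EuclideanSpace ℝ (Fin p))
    (hv : v ∈ ((affineSpan ℝ (subdiff pen β)).direction)ᗮ) :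
    ∃ ε > 0, ∀ δ : ℝ, |δ| ≤ ε → subdiff pen (β + δ • v) = subdiff pen β := by
  obtain ⟨i₀, -, hi₀⟩ := Finset.exists_mem_eq_sup' Finset.univ_nonempty (fun i => ⟪u i, β⟫)
  have hi₀' : ⟪u i₀, β⟫ = pen β := by rw [hpen]; exact hi₀.symm
  set c : ℝ := ⟪u i₀, v⟫ with hc_def
  have hui₀ : u i₀ ∈ subdiff pen β := active_subdiff u pen hpen β i₀ hi₀'
  have hc : ∀ s ∈ subdiff pen β, ⟪s, v⟫ = c :=
    fun s hs => inner_const_on_subdiff u pen hpen β v hv s (u i₀) hs hui₀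
  -- ε₀
  set f : Fin (k+1) → ℝ := fun i =>
    if ⟪u i, β⟫ = pen β then 1 else (pen β - ⟪u i, β⟫) / (|⟪u i, v⟫ - c| + 1) with hf_def
  set ε₀ : ℝ := Finset.univ.inf' Finset.univ_nonempty f with hε₀_def
  have hε₀pos : 0 < ε₀ := by
    rw [hε₀_def, Finset.lt_inf'_iff]
    intro i _
    rw [hf_def]
    by_cases hi : ⟪u i, β⟫ = pen β
    · simp [hi]
    · simp only [hi, if_false]
      have hlt : ⟪u i, β⟫ < pen β := lt_of_le_of_ne (pen_le u pen hpen i β) hi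
      have : (0:ℝ) < |⟪u i, v⟫ - c| + 1 := by positivity
      exact div_pos (by linarith) this
  have hkey : ∀ δ : ℝ, |δ| ≤ ε₀ → pen (β + δ • v) = pen β + δ * c := by
    intro δ hδ
    have habsδ : 0 ≤ |δ| := abs_nonneg δ
    apply le_antisymm
    · rw [hpen]
      apply Finset.sup'_le
      intro i _
      rw [inner_add_right, real_inner_smul_right]
      by_cases hi : ⟪u i, β⟫ = pen β
      · rw [hi, hc (u i) (active_subdiff u pen hpen β i hi)]
      · have hlt : ⟪u i, β⟫ < pen β := lt_of_le_of_ne (pen_le u pen hpen i β) hi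
        have hεle : ε₀ ≤ (pen β - ⟪u i, β⟫) / (|⟪u i, v⟫ - c| + 1) := by
          have := Finset.inf'_le f (Finset.mem_univ i)
          rw [← hε₀_def] at this
          simp only [hf_def] at this
          rwa [if_neg hi] at this
        have hM : (0:ℝ) ≤ |⟪u i, v⟫ - c| := abs_nonneg _
        have hden : (0:ℝ) < |⟪u i, v⟫ - c| + 1 := by positivity
        have hεle' : ε₀ * (|⟪u i, v⟫ - c| + 1) ≤ pen β - ⟪u i, β⟫ :=
          (le_div_iff₀ hden).1 hεle
        have h1 : δ * (⟪u i, v⟫ - c) ≤ |δ| * |⟪u i, v⟫ - c| := by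
          calc δ * (⟪u i, v⟫ - c) ≤ |δ * (⟪u i, v⟫ - c)| := le_abs_self _
          _ = |δ| * |⟪u i, v⟫ - c| := abs_mul _ _
        nlinarith
    · have : ⟪u i₀, β + δ • v⟫ = pen β + δ * c := by
        rw [inner_add_right, real_inner_smul_right, hi₀']
      rw [← this]
      exact pen_le u pen hpen i₀ _
  refine ⟨ε₀ / 2, by linarith, fun δ hδ => ?_⟩
  have hδ' : |δ| ≤ ε₀ := by
    have := abs_nonneg δ; linarith
  ext s
  rw [subdiff_mem_iff u pen hpen, subdiff_mem_iff u pen hpen]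
  constructor
  · rintro ⟨hK, heq⟩
    -- s ∈ ∂pen (β + δv) ⇒ s ∈ ∂pen β
    have hsv : ⟪s, v⟫ = c := by
      have hplus := hK (β + (δ + ε₀/2) • v)
      have hminus := hK (β + (δ - ε₀/2) • v)
      have e1 : |δ + ε₀/2| ≤ ε₀ := by
        calc |δ + ε₀/2| ≤ |δ| + |ε₀/2| := abs_add_le _ _
        _ ≤ ε₀ := by rw [abs_of_pos (by linarith : (0:ℝ) < ε₀/2)]; linarith
      have e2 : |δ - ε₀/2| ≤ ε₀ := by
        calc |δ - ε₀/2| ≤ |δ| + |ε₀/2| := abs_sub _ _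
        _ ≤ ε₀ := by rw [abs_of_pos (by linarith : (0:ℝ) < ε₀/2)]; linarith
      rw [hkey _ e1, inner_add_right, real_inner_smul_right] at hplus
      rw [hkey _ e2, inner_add_right, real_inner_smul_right] at hminus
      rw [hkey _ hδ', inner_add_right, real_inner_smul_right] at heq
      nlinarith
    have hβeq : ⟪s, β⟫ = pen β := by
      rw [hkey _ hδ', inner_add_right, real_inner_smul_right, hsv] at heq
      linarith
    exact ⟨hK, hβeq⟩
  · rintro ⟨hK, heq⟩
    refine ⟨hK, ?_⟩
    have hsβ : s ∈ subdiff pen β := (subdiff_mem_iff u pen hpen β s).2 ⟨hK, heq⟩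
    rw [hkey _ hδ', inner_add_right, real_inner_smul_right, heq, hc s hsβ]

lemma span_classe :
    (Submodule.span ℝ {x | subdiff pen x = subdiff pen β})
      = ((affineSpan ℝ (subdiff pen β)).direction)ᗮ := by
  apply le_antisymm
  · rw [Submodule.span_le]
    intro b hb
    have hb' : subdiff pen b = subdiff pen β := hb
    rw [SetLike.mem_coe, Submodule.mem_orthogonal]
    intro w hw
    rw [direction_affineSpan] at hw
    have hvs : vectorSpan ℝ (subdiff pen β)
        = Submodule.span ℝ (subdiff pen β -ᵥ subdiff pen β) := rfl
    rw [hvs] at hw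
    induction hw using Submodule.span_induction with
    | mem x hx =>
      obtain ⟨s, hs, t, ht, rfl⟩ := Set.mem_vsub.1 hx
      rw [← hb'] at hs ht
      have hs' := ((subdiff_mem_iff u pen hpen b s).1 hs).2
      have ht' := ((subdiff_mem_iff u pen hpen b t).1 ht).2
      have : s -ᵥ t = s - t := rfl
      rw [this, inner_sub_left, hs', ht', sub_self]
    | zero => simp
    | add x y _ _ hx hy => rw [inner_add_left, hx, hy, add_zero]
    | smul r x _ hx => rw [real_inner_smul_left, hx, mul_zero]
  · intro v hv
    obtain ⟨ε, hε, hsh⟩ := shift_subdiff u pen hpen β v hv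
    have h1 : β + ε • v ∈ {x | subdiff pen x = subdiff pen β} :=
      hsh ε (by rw [abs_of_pos hε])
    have h2 : β ∈ {x | subdiff pen x = subdiff pen β} := rfl
    have h3 : ε • v ∈ Submodule.span ℝ {x | subdiff pen x = subdiff pen β} := by
      have h1' : β + ε • v ∈ Submodule.span ℝ {x | subdiff pen x = subdiff pen β} :=
        Submodule.subset_span h1
      have h2' : β ∈ Submodule.span ℝ {x | subdiff pen x = subdiff pen β} :=
        Submodule.subset_span h2
      have := sub_mem h1' h2'
      simpa using this
    have h4 := Submodule.smul_mem _ ε⁻¹ h3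
    rwa [smul_smul, inv_mul_cancel₀ (ne_of_gt hε), one_smul] at h4

end Aux2

lemma toEuc_sub {n : ℕ} (a b : Fin n → ℝ) : toEuc (a - b) = toEuc a - toEuc b := rfl

lemma toEuc_smul {n : ℕ} (t : ℝ) (a : Fin n → ℝ) : toEuc (t • a) = t • toEuc a := rfl

lemma inner_toEuc_mulVec {n p : ℕ} (X : Matrix (Fin n) (Fin p) ℝ) (a : Fin p → ℝ)
    (z : EuclideanSpace ℝ (Fin n)) :
    ⟪toEuc (X.mulVec a), z⟫ = ⟪toEuc a, toEuc (X.transpose.mulVec z)⟫ := by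
  simp only [toEuc, PiLp.inner_apply, WithLp.equiv_symm_apply, PiLp.toLp_apply, RCLike.inner_apply,
    conj_trivial, Matrix.mulVec, dotProduct, Matrix.transpose_apply,
    Finset.sum_mul, Finset.mul_sum]
  rw [Finset.sum_comm]
  exact Finset.sum_congr rfl fun i _ => Finset.sum_congr rfl fun j _ => by ring

lemma inner_XtX {n p : ℕ} (X : Matrix (Fin n) (Fin p) ℝ) (v : Fin p → ℝ)
    (w : EuclideanSpace ℝ (Fin p)) :
    ⟪toEuc ((X.transpose * X).mulVec v), w⟫ = ⟪toEuc (X.mulVec v), toEuc (X.mulVec w)⟫ := by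
  rw [← Matrix.mulVec_mulVec]
  rw [inner_toEuc_mulVec X.transpose (X.mulVec v) w, Matrix.transpose_transpose]

lemma mulVec_toEuc_smul {n p : ℕ} (X : Matrix (Fin n) (Fin p) ℝ) (t : ℝ)
    (a : EuclideanSpace ℝ (Fin p)) :
    toEuc (X.mulVec (t • a)) = t • toEuc (X.mulVec a) := by
  ext i
  simp only [toEuc, WithLp.equiv_symm_apply, PiLp.toLp_apply, Matrix.mulVec, dotProduct,
    PiLp.smul_apply, Pi.smul_apply, smul_eq_mul, Finset.mul_sum]
  exact Finset.sum_congr rfl fun j _ => by ring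

lemma mulVec_toEuc_sub {n p : ℕ} (X : Matrix (Fin n) (Fin p) ℝ)
    (a b : EuclideanSpace ℝ (Fin p)) :
    toEuc (X.mulVec (a - b)) = toEuc (X.mulVec a) - toEuc (X.mulVec b) := by
  ext i
  simp only [toEuc, WithLp.equiv_symm_apply, PiLp.toLp_apply, Matrix.mulVec, dotProduct,
    PiLp.sub_apply, Pi.sub_apply, ← Finset.sum_sub_distrib]
  exact Finset.sum_congr rfl fun j _ => by ring

lemma mulVec_toEuc_add {n p : ℕ} (X : Matrix (Fin n) (Fin p) ℝ)
    (a b : EuclideanSpace ℝ (Fin p)) :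
    toEuc (X.mulVec (a + b)) = toEuc (X.mulVec a) + toEuc (X.mulVec b) := by
  ext i
  simp only [toEuc, WithLp.equiv_symm_apply, PiLp.toLp_apply, Matrix.mulVec, dotProduct,
    PiLp.add_apply, Pi.add_apply, ← Finset.sum_add_distrib]
  exact Finset.sum_congr rfl fun j _ => by ring


set_option maxHeartbeats 1000000 in
/-- Geometric characterization of the noiseless recovery condition:
(i) noiseless recovery for `β`, (ii) `XᵀX·lin(C_β) ∩ ∂pen(β) ≠ ∅`, and (iii)
`XᵀX·(vec-aff(∂pen(β)))^⊥ ∩ ∂pen(β) ≠ ∅` are all equivalent. -/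
theorem noiseless_recovery_geometric {n p k : ℕ}
    (X : Matrix (Fin n) (Fin p) ℝ)
    (u : Fin (k + 1) → EuclideanSpace ℝ (Fin p)) (hu : u 0 = 0)
    (pen : EuclideanSpace ℝ (Fin p) → ℝ)
    (hpen : ∀ x, pen x = Finset.univ.sup' Finset.univ_nonempty fun i => ⟪u i, x⟫)
    (β : EuclideanSpace ℝ (Fin p)) :
    ((∃ lam > 0, ∃ βh ∈ Smin X lam pen (toEuc (X.mulVec β)),
        subdiff pen βh = subdiff pen β)
      ↔ (((fun v : EuclideanSpace ℝ (Fin p) => toEuc ((X.transpose * X).mulVec v)) ''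
            (Submodule.span ℝ {x | subdiff pen x = subdiff pen β} :
              Set (EuclideanSpace ℝ (Fin p))))
          ∩ subdiff pen β).Nonempty)
    ∧ ((((fun v : EuclideanSpace ℝ (Fin p) => toEuc ((X.transpose * X).mulVec v)) ''
            (Submodule.span ℝ {x | subdiff pen x = subdiff pen β} :
              Set (EuclideanSpace ℝ (Fin p))))
          ∩ subdiff pen β).Nonempty
      ↔ (((fun v : EuclideanSpace ℝ (Fin p) => toEuc ((X.transpose * X).mulVec v)) ''
            ((((affineSpan ℝ (subdiff pen β)).direction)ᗮ :
              Submodule ℝ (EuclideanSpace ℝ (Fin p))) :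
              Set (EuclideanSpace ℝ (Fin p))))
          ∩ subdiff pen β).Nonempty) := by
  constructor
  · constructor
    · -- (i) → (ii)
      rintro ⟨lam, hlam, βh, hβh, hsub⟩
      refine ⟨toEuc ((X.transpose * X).mulVec ((1/lam) • (β - βh))),
        ⟨(1/lam) • (β - βh), ?_, rfl⟩, ?_⟩
      · have hβ : β ∈ {x | subdiff pen x = subdiff pen β} := rfl
        have hβh' : βh ∈ {x | subdiff pen x = subdiff pen β} := hsub
        exact SetLike.mem_coe.2 (Submodule.smul_mem _ _
          (sub_mem (Submodule.subset_span hβ) (Submodule.subset_span hβh')))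
      · rw [← hsub]
        intro b
        have hsinner : ⟪toEuc ((X.transpose * X).mulVec ((1/lam) • (β - βh))), b - βh⟫
            = (1/lam) * ⟪toEuc (X.mulVec β) - toEuc (X.mulVec βh),
                toEuc (X.mulVec b) - toEuc (X.mulVec βh)⟫ := by
          rw [inner_XtX, mulVec_toEuc_smul, mulVec_toEuc_sub, real_inner_smul_left]
          congr 2
          exact mulVec_toEuc_sub X b βh
        rw [hsinner]
        set I := ⟪toEuc (X.mulVec β) - toEuc (X.mulVec βh),
          toEuc (X.mulVec b) - toEuc (X.mulVec βh)⟫ with hI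
        have hkey : lam * pen βh + I ≤ lam * pen b := by
          apply le_of_forall_pos_le_add
          intro ε hε
          set A := toEuc (X.mulVec β) - toEuc (X.mulVec βh) with hA
          set D := toEuc (X.mulVec b) - toEuc (X.mulVec βh) with hD
          rw [hI]
          set t : ℝ := min 1 (ε / ((1/2) * ‖D‖^2 + 1)) with ht_def
          have htpos : 0 < t := lt_min one_pos (by positivity)
          have ht1 : t ≤ 1 := min_le_left _ _
          have ht2 : t ≤ ε / ((1/2) * ‖D‖^2 + 1) := min_le_right _ _
          have hmin := hβh (βh + t • (b - βh))
          have hBt : toEuc (X.mulVec (βh + t • (b - βh)))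
              = toEuc (X.mulVec βh) + t • D := by
            rw [mulVec_toEuc_add, mulVec_toEuc_smul, mulVec_toEuc_sub]
          simp only [WithLp.ofLp_add, WithLp.ofLp_smul, WithLp.ofLp_sub] at hmin
          rw [hBt] at hmin
          have hAeq : toEuc (X.mulVec β) - toEuc (X.mulVec βh) = A := rfl
          have hY1 : toEuc (X.mulVec β) - (toEuc (X.mulVec βh) + t • D) = A - t • D := by
            rw [← hAeq]; abel
          rw [hY1, ← hAeq] at hmin
          have hnorm : ‖A - t • D‖^2 = ‖A‖^2 - 2 * (t * ⟪A, D⟫) + t^2 * ‖D‖^2 := by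
            rw [norm_sub_sq_real, real_inner_smul_right, norm_smul]
            rw [mul_pow, Real.norm_eq_abs, sq_abs]
          rw [hnorm] at hmin
          have hconv := pen_convex u pen hpen βh b t (le_of_lt htpos) ht1
          have hlamconv : lam * pen (βh + t • (b - βh))
              ≤ lam * ((1 - t) * pen βh + t * pen b) :=
            mul_le_mul_of_nonneg_left hconv (le_of_lt hlam)
          have hstep : t * (lam * pen βh + ⟪A, D⟫)
              ≤ t * (lam * pen b) + t^2 * ((1/2) * ‖D‖^2) := by
            linarith [hmin, hlamconv]
          have hsmall : t * ((1/2) * ‖D‖^2) ≤ ε := by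
            have := (le_div_iff₀ (show (0:ℝ) < (1/2) * ‖D‖^2 + 1 by positivity)).1 ht2
            linarith
          have h3 : t * (lam * pen βh + ⟪A, D⟫) ≤ t * (lam * pen b + ε) := by
            have h4 := mul_le_mul_of_nonneg_left hsmall (le_of_lt htpos)
            nlinarith [hstep, h4]
          exact (mul_le_mul_iff_right₀ htpos).1 h3
        have hlamne : lam ≠ 0 := ne_of_gt hlam
        have h3 := mul_le_mul_of_nonneg_left hkey
          (le_of_lt (show (0:ℝ) < 1/lam by positivity))
        have e1 : 1/lam * (lam * pen βh + I) = pen βh + 1/lam * I := by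
          field_simp
        have e2 : 1/lam * (lam * pen b) = pen b := by field_simp
        linarith
    · -- (ii) → (i)
      rintro ⟨s, ⟨v, hv, rfl⟩, hs⟩
      rw [span_classe u pen hpen β] at hv
      set vE : EuclideanSpace ℝ (Fin p) := v with hvE_def
      have hv' : vE ∈ ((affineSpan ℝ (subdiff pen β)).direction)ᗮ := hv
      obtain ⟨ε, hε, hsh⟩ := shift_subdiff u pen hpen β vE hv'
      have hsub : subdiff pen (β + (-ε) • vE) = subdiff pen β :=
        hsh (-ε) (by rw [abs_neg, abs_of_pos hε])
      refine ⟨ε, hε, β + (-ε) • vE, ?_, hsub⟩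
      intro b
      rw [← hsub] at hs
      set bE : EuclideanSpace ℝ (Fin p) := b with hbE_def
      have hgrad := hs bE
      beta_reduce at hgrad
      set w := toEuc (X.mulVec vE) with hw
      have hβh : toEuc (X.mulVec (β + (-ε) • vE)) = toEuc (X.mulVec β) + (-ε) • w := by
        rw [mulVec_toEuc_add, mulVec_toEuc_smul]
      have hY : toEuc (X.mulVec β) - toEuc (X.mulVec (β + (-ε) • vE)) = ε • w := by
        rw [hβh, neg_smul]; abel
      have hinner : ⟪toEuc ((X.transpose * X).mulVec vE), bE - (β + (-ε) • vE)⟫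
          = ⟪w, (toEuc (X.mulVec bE) - toEuc (X.mulVec β)) + ε • w⟫ := by
        rw [inner_XtX]
        congr 1
        rw [WithLp.ofLp_sub, mulVec_toEuc_sub X bE (β + (-ε) • vE), WithLp.ofLp_add, WithLp.ofLp_smul, hβh, neg_smul]
        abel
      rw [hinner] at hgrad
      rw [WithLp.ofLp_add, WithLp.ofLp_smul, hY]
      set C := toEuc (X.mulVec β) - toEuc (X.mulVec bE) with hC
      have hCin : toEuc (X.mulVec bE) - toEuc (X.mulVec β) = -C := by rw [hC]; abel
      rw [hCin] at hgrad
      have hw1 : ‖ε • w‖^2 = ε^2 * ‖w‖^2 := by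
        rw [norm_smul, mul_pow, Real.norm_eq_abs, sq_abs]
      have hw2 : ⟪w, -C + ε • w⟫ = -⟪w, C⟫ + ε * ‖w‖^2 := by
        rw [inner_add_right, inner_neg_right, real_inner_smul_right,
          real_inner_self_eq_norm_sq]
      rw [hw2] at hgrad
      have hexp : ‖C - ε • w‖^2 = ‖C‖^2 - 2 * (ε * ⟪C, w⟫) + ε^2 * ‖w‖^2 := by
        rw [norm_sub_sq_real, real_inner_smul_right, norm_smul, mul_pow,
          Real.norm_eq_abs, sq_abs]
      have hcomm : ⟪C, w⟫ = ⟪w, C⟫ := real_inner_comm _ _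
      rw [hw1]
      have hsq : 0 ≤ ‖C‖^2 - 2 * (ε * ⟪C, w⟫) + ε^2 * ‖w‖^2 := hexp ▸ sq_nonneg _
      have hgrad2 := mul_le_mul_of_nonneg_left hgrad (le_of_lt hε)
      rw [hcomm] at hsq
      nlinarith [hsq, hgrad2]
  · -- (ii) ↔ (iii)
    rw [span_classe u pen hpen β]
end
end

section
/- Let s_1,…,s_m ∈ ℝ^p and r_1,…,r_m ∈ ℝ, let P be the polyhedron {b ∈ ℝ^p : ⟨s_l,b⟩ ≤ r_l for all l ∈ {1,…,m}}, let b̄ ∈ P, let Ī = {l : ⟨s_l,b̄⟩ = r_l}, and let F = {b ∈ P : ⟨s_l,b⟩ = r_l for all l ∈ Ī}. Then the linear span of the normal cone N_P(b̄) equals the orthogonal complement of the direction space of the affine hull of F, i.e. lin(N_P(b̄)) = (vec-aff(F))^⊥. -/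
open scoped RealInnerProductSpace

noncomputable section

private lemma exists_eps' {p m : ℕ} (s : Fin m → EuclideanSpace ℝ (Fin p)) (r : Fin m → ℝ)
    (bbar w : EuclideanSpace ℝ (Fin p))
    (hbbar : ∀ l, ⟪s l, bbar⟫ ≤ r l)
    (hw : ∀ l, ⟪s l, bbar⟫ = r l → ⟪s l, w⟫ = 0) :
    ∃ ε : ℝ, 0 < ε ∧ ∀ l, ⟪s l, bbar + ε • w⟫ ≤ r l := by
  classical
  rcases Nat.eq_zero_or_pos m with hm | hm
  · subst hm; exact ⟨1, one_pos, fun l => l.elim0⟩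
  set f : Fin m → ℝ := fun l => if 0 < ⟪s l, w⟫ then (r l - ⟪s l, bbar⟫) / ⟪s l, w⟫ else 1 with hf
  have hfpos : ∀ l, 0 < f l := by
    intro l
    simp only [hf]
    split_ifs with h
    · apply div_pos _ h
      rcases lt_or_eq_of_le (hbbar l) with h' | h'
      · linarith
      · exact absurd (hw l h') (by linarith)
    · exact one_pos
  have hne : (Finset.univ : Finset (Fin m)).Nonempty := ⟨⟨0, hm⟩, Finset.mem_univ _⟩
  refine ⟨Finset.univ.inf' hne f, ?_, ?_⟩
  · exact (Finset.lt_inf'_iff hne).2 fun l _ => hfpos l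
  · intro l
    have hle : Finset.univ.inf' hne f ≤ f l := Finset.inf'_le f (Finset.mem_univ l)
    rw [inner_add_right, real_inner_smul_right]
    rcases le_or_gt ⟪s l, w⟫ 0 with h | h
    · have := mul_nonpos_of_nonneg_of_nonpos
        (le_of_lt ((Finset.lt_inf'_iff hne).2 fun l _ => hfpos l)) h
      linarith [hbbar l]
    · have hfl : f l = (r l - ⟪s l, bbar⟫) / ⟪s l, w⟫ := if_pos h
      have : Finset.univ.inf' hne f * ⟪s l, w⟫ ≤ f l * ⟪s l, w⟫ :=
        mul_le_mul_of_nonneg_right hle h.le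
      rw [hfl, div_mul_cancel₀ _ h.ne'] at this
      linarith


/-- For a polyhedron `P = {b : ⟪s_l,b⟫ ≤ r_l ∀l}`, a point `b̄ ∈ P`, and
the smallest face `F = {b ∈ P : ⟪s_l,b⟫ = r_l ∀ l ∈ Ī}` with `Ī = {l : ⟪s_l,b̄⟫ = r_l}`,
the linear span of the normal cone `N_P(b̄)` equals `(vec-aff(F))^⊥`. -/
theorem span_normalCone_eq_orthogonal {p m : ℕ}
    (s : Fin m → EuclideanSpace ℝ (Fin p)) (r : Fin m → ℝ)
    (bbar : EuclideanSpace ℝ (Fin p))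
    (hbbar : ∀ l, ⟪s l, bbar⟫ ≤ r l) :
    Submodule.span ℝ
        (normalCone' {b : EuclideanSpace ℝ (Fin p) | ∀ l, ⟪s l, b⟫ ≤ r l} bbar)
      = ((affineSpan ℝ {b : EuclideanSpace ℝ (Fin p) |
            (∀ l, ⟪s l, b⟫ ≤ r l) ∧
            ∀ l, ⟪s l, bbar⟫ = r l → ⟪s l, b⟫ = r l}).direction)ᗮ := by
  classical
  set P : Set (EuclideanSpace ℝ (Fin p)) := {b | ∀ l, ⟪s l, b⟫ ≤ r l} with hPdef
  set F : Set (EuclideanSpace ℝ (Fin p)) :=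
    {b | (∀ l, ⟪s l, b⟫ ≤ r l) ∧ ∀ l, ⟪s l, bbar⟫ = r l → ⟪s l, b⟫ = r l} with hFdef
  set S : Set (EuclideanSpace ℝ (Fin p)) := {x | ∃ l, ⟪s l, bbar⟫ = r l ∧ x = s l} with hSdef
  set M : Submodule ℝ (EuclideanSpace ℝ (Fin p)) := Submodule.span ℝ S with hMdef
  -- characterization of Mᗮ
  have hMorth : ∀ v : EuclideanSpace ℝ (Fin p),
      v ∈ Mᗮ ↔ ∀ l, ⟪s l, bbar⟫ = r l → ⟪s l, v⟫ = 0 := by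
    intro v
    constructor
    · intro hv l hl
      exact Submodule.inner_right_of_mem_orthogonal (Submodule.subset_span (show s l ∈ S from ⟨l, hl, rfl⟩)) hv
    · intro h
      rw [Submodule.mem_orthogonal]
      intro u hu
      induction hu using Submodule.span_induction with
      | mem x hx => obtain ⟨l, hl, rfl⟩ := hx; exact h l hl
      | zero => simp
      | add x y _ _ hx hy => rw [inner_add_left, hx, hy, add_zero]
      | smul a x _ hx => rw [real_inner_smul_left, hx, mul_zero]
  -- Step A: span of the normal cone equals M
  have hSN : S ⊆ normalCone' P bbar := by
    rintro x ⟨l, hl, rfl⟩ b hb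
    rw [inner_sub_right, hl]
    linarith [hb l]
  have hNM : normalCone' P bbar ⊆ (M : Set (EuclideanSpace ℝ (Fin p))) := by
    intro v hv
    set u : EuclideanSpace ℝ (Fin p) := (M.orthogonalProjectionOnto v : EuclideanSpace ℝ (Fin p))
      with hu
    set w : EuclideanSpace ℝ (Fin p) := v - u with hwdef
    have hwMo : w ∈ Mᗮ := by have := M.sub_starProjection_mem_orthogonal v; rwa [Submodule.starProjection_apply] at this
    obtain ⟨ε, hε, hεP⟩ := exists_eps' s r bbar w hbbar ((hMorth w).1 hwMo)
    have hmem : bbar + ε • w ∈ P := hεP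
    have hvw : ⟪v, bbar + ε • w - bbar⟫ ≤ 0 := hv _ hmem
    rw [add_sub_cancel_left, real_inner_smul_right] at hvw
    have hvweq : ⟪v, w⟫ = ‖w‖ ^ 2 := by
      have hv' : v = u + w := by rw [hwdef]; abel
      rw [hv', inner_add_left,
        Submodule.inner_right_of_mem_orthogonal (M.orthogonalProjectionOnto v).2 hwMo,
        zero_add, real_inner_self_eq_norm_sq]
    have hw0 : w = 0 := by
      rw [hvweq] at hvw
      have h2 : ‖w‖ ^ 2 ≤ 0 := by nlinarith
      have h3 : ‖w‖ = 0 := le_antisymm (by nlinarith [norm_nonneg w]) (norm_nonneg w)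
      exact norm_eq_zero.1 h3
    have hvu : v = u := by
      have : v - u = 0 := by rw [← hwdef]; exact hw0
      exact sub_eq_zero.1 this
    rw [hvu]
    exact (M.orthogonalProjectionOnto v).2
  have hspanN : Submodule.span ℝ (normalCone' P bbar) = M := by
    apply le_antisymm
    · exact Submodule.span_le.2 hNM
    · exact Submodule.span_mono hSN
  -- Step B: direction of affine span of F equals Mᗮ
  have hdir : (affineSpan ℝ F).direction = Mᗮ := by
    apply le_antisymm
    · rw [direction_affineSpan, vectorSpan_def]
      apply Submodule.span_le.2
      intro v hv
      rw [Set.mem_vsub] at hv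
      obtain ⟨x, hx, y, hy, rfl⟩ := hv
      rw [SetLike.mem_coe, hMorth]
      intro l hl
      have : (x -ᵥ y : EuclideanSpace ℝ (Fin p)) = x - y := rfl
      rw [this, inner_sub_right, hx.2 l hl, hy.2 l hl, sub_self]
    · intro w hw
      obtain ⟨ε, hε, hεP⟩ := exists_eps' s r bbar w hbbar ((hMorth w).1 hw)
      have hb1 : bbar + ε • w ∈ F := by
        refine ⟨hεP, fun l hl => ?_⟩
        rw [inner_add_right, real_inner_smul_right, (hMorth w).1 hw l hl, mul_zero, add_zero]
        exact hl
      have hb0 : bbar ∈ F := ⟨hbbar, fun l hl => hl⟩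
      have hsub : ε • w ∈ (affineSpan ℝ F).direction := by
        have := AffineSubspace.vsub_mem_direction
          (subset_affineSpan ℝ F hb1) (subset_affineSpan ℝ F hb0)
        have heq : (bbar + ε • w -ᵥ bbar : EuclideanSpace ℝ (Fin p)) = ε • w := by
          rw [vsub_eq_sub, add_sub_cancel_left]
        rwa [heq] at this
      have hsm := (affineSpan ℝ F).direction.smul_mem ε⁻¹ hsub
      rwa [smul_smul, inv_mul_cancel₀ hε.ne', one_smul] at hsm
  rw [hspanN, hdir, Submodule.orthogonal_orthogonal]
end
end

section
/- Let X ∈ ℝ^{n×p}, y ∈ ℝ^n, λ > 0, and let pen be a real-valued polyhedral gauge on ℝ^p (pen(b) = max{⟨u_1,b⟩,…,⟨u_k,b⟩} with u_1 = 0). Then any two minimizers β̂, β̃ ∈ S_{X,λpen}(y) satisfy Xβ̂ = Xβ̃ and pen(β̂) = pen(β̃). -/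
open scoped RealInnerProductSpace

noncomputable section

lemma toEuc_mid {n p : ℕ} (X : Matrix (Fin n) (Fin p) ℝ) (a b : EuclideanSpace ℝ (Fin p)) :
    toEuc (X.mulVec ((1/2:ℝ) • (a + b))) = (1/2:ℝ) • (toEuc (X.mulVec a) + toEuc (X.mulVec b)) := by
  ext i
  simp [toEuc, Matrix.mulVec, dotProduct, mul_add, Finset.sum_add_distrib, Finset.mul_sum,
    PiLp.smul_apply, PiLp.add_apply, smul_eq_mul]
  congr 1 <;> (apply Finset.sum_congr rfl; intros; ring)

/-- Any two minimizers `β̂, β̃ ∈ S_{X,λpen}(y)` have the same fitted values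
`Xβ̂ = Xβ̃` and the same penalty `pen(β̂) = pen(β̃)`. -/
theorem fitted_values_unique {n p k : ℕ}
    (X : Matrix (Fin n) (Fin p) ℝ) (y : EuclideanSpace ℝ (Fin n))
    (lam : ℝ) (hlam : 0 < lam)
    (u : Fin (k + 1) → EuclideanSpace ℝ (Fin p)) (hu : u 0 = 0)
    (pen : EuclideanSpace ℝ (Fin p) → ℝ)
    (hpen : ∀ x, pen x = Finset.univ.sup' Finset.univ_nonempty fun i => ⟪u i, x⟫)
    (βh βt : EuclideanSpace ℝ (Fin p))
    (h1 : βh ∈ Smin X lam pen y) (h2 : βt ∈ Smin X lam pen y) :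
    X.mulVec βh = X.mulVec βt ∧ pen βh = pen βt := by
  have hv : toEuc (X.mulVec βh) = toEuc (X.mulVec βh) := rfl
  let v := toEuc (X.mulVec βh)
  let w := toEuc (X.mulVec βt)
  let m : EuclideanSpace ℝ (Fin p) := (1/2:ℝ) • (βh + βt)
  have hm : toEuc (X.mulVec m) = (1/2:ℝ) • (v + w) := toEuc_mid X βh βt
  -- convexity of pen
  have hpenm : pen m ≤ (pen βh + pen βt) / 2 := by
    rw [hpen]
    apply Finset.sup'_le
    intro i _
    have hA : ⟪u i, βh⟫ ≤ pen βh := by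
      rw [hpen βh]; exact Finset.le_sup' (fun j => ⟪u j, βh⟫) (Finset.mem_univ i)
    have hB : ⟪u i, βt⟫ ≤ pen βt := by
      rw [hpen βt]; exact Finset.le_sup' (fun j => ⟪u j, βt⟫) (Finset.mem_univ i)
    have hC : ⟪u i, m⟫ = (⟪u i, βh⟫ + ⟪u i, βt⟫) / 2 := by
      show ⟪u i, (1/2:ℝ) • (βh + βt)⟫ = _
      rw [real_inner_smul_right, inner_add_right]; ring
    rw [hC]; linarith
  -- strong convexity of the squared loss
  have hpar : ‖y - toEuc (X.mulVec m)‖^2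
      = (‖y - v‖^2 + ‖y - w‖^2) / 2 - ‖v - w‖^2 / 4 := by
    rw [hm]
    have hy : y - (1/2:ℝ) • (v + w) = (1/2:ℝ) • ((y - v) + (y - w)) := by
      module
    rw [hy, norm_smul]
    have hpl := parallelogram_law_with_norm ℝ (y - v) (y - w)
    have hsub : (y - v) - (y - w) = w - v := by abel
    rw [hsub] at hpl
    have hrev : ‖w - v‖ = ‖v - w‖ := norm_sub_rev _ _
    rw [hrev] at hpl
    have hexp : ‖(y - v) + (y - w)‖^2 = 2 * ‖y - v‖^2 + 2 * ‖y - w‖^2 - ‖v - w‖^2 := by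
      simp only [pow_two]; linarith
    have hns : ‖(1/2:ℝ)‖ = (1/2:ℝ) := by simp [abs_of_nonneg]
    rw [hns, mul_pow, hexp]
    ring
  -- combine
  have hmin := h1 m
  have heq12 : (1/2) * ‖y - v‖^2 + lam * pen βh = (1/2) * ‖y - w‖^2 + lam * pen βt :=
    le_antisymm (h1 βt) (h2 βh)
  have key : ‖v - w‖^2 ≤ 0 := by
    rw [hpar] at hmin
    have hl : lam * pen m ≤ lam * ((pen βh + pen βt) / 2) :=
      mul_le_mul_of_nonneg_left hpenm hlam.le
    nlinarith [hmin, hl, heq12]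
  have hvw : v = w := by
    have hnz : ‖v - w‖ = 0 := by nlinarith [norm_nonneg (v - w), sq_nonneg ‖v - w‖]
    exact sub_eq_zero.mp (norm_eq_zero.mp hnz)
  have hX : X.mulVec βh = X.mulVec βt := by
    have h := congrArg (WithLp.equiv 2 (Fin n → ℝ)) hvw
    simpa [v, w, toEuc] using h
  refine ⟨hX, ?_⟩
  have hnorm : ‖y - v‖ = ‖y - w‖ := by rw [hvw]
  have hle : lam * pen βh = lam * pen βt := by
    rw [hnorm] at heq12; linarith
  exact mul_left_cancel₀ (ne_of_gt hlam) hle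
end
end

section
/- Let X ∈ ℝ^{n×p}, y ∈ ℝ^n, λ > 0, and let pen : ℝ^p → ℝ be given by pen(x) = max{⟨u_1,x⟩,…,⟨u_k,x⟩} where u_1,…,u_k ∈ ℝ^p with u_1 = 0. Then the function f(b) = (1/2)‖y − Xb‖₂² + λ·pen(b) attains its infimum over ℝ^p, i.e. there exists b* ∈ ℝ^p with f(b*) ≤ f(b) for all b ∈ ℝ^p. -/
open scoped RealInnerProductSpace

noncomputable section

def XL {n p : ℕ} (X : Matrix (Fin n) (Fin p) ℝ) :
    EuclideanSpace ℝ (Fin p) →ₗ[ℝ] EuclideanSpace ℝ (Fin n) where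
  toFun b := toEuc (X.mulVec b)
  map_add' a b := by
    ext i
    simp [toEuc, Matrix.mulVec, dotProduct, mul_add,
      Finset.sum_add_distrib]
  map_smul' r a := by
    ext i
    simp [toEuc, Matrix.mulVec, dotProduct, Finset.mul_sum,
      mul_comm, mul_left_comm]

lemma XL_apply {n p : ℕ} (X : Matrix (Fin n) (Fin p) ℝ) (b : EuclideanSpace ℝ (Fin p)) :
    XL X b = toEuc (X.mulVec b) := rfl

lemma sup'_mul_left {ι : Type*} (s : Finset ι) (hs : s.Nonempty) (f : ι → ℝ) (r : ℝ)
    (hr : 0 ≤ r) : s.sup' hs (fun i => r * f i) = r * s.sup' hs f := by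
  obtain ⟨i0, hi0, h0⟩ := s.exists_mem_eq_sup' hs f
  obtain ⟨i1, hi1, h1⟩ := s.exists_mem_eq_sup' hs (fun i => r * f i)
  apply le_antisymm
  · rw [h1]
    exact mul_le_mul_of_nonneg_left (Finset.le_sup' f hi1) hr
  · rw [h0]
    exact Finset.le_sup' (fun i => r * f i) hi0


lemma exists_min_on_submodule {E : Type*} [NormedAddCommGroup E] [InnerProductSpace ℝ E]
    [FiniteDimensional ℝ E] (V : Submodule ℝ E) (g : E → ℝ) (hcont : Continuous g)
    (C R : ℝ) (hR : 0 ≤ R) (hg0 : g 0 ≤ C) (hcoer : ∀ b ∈ V, R ≤ ‖b‖ → C ≤ g b) :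
    ∃ bs ∈ V, ∀ b ∈ V, g bs ≤ g b := by
  have hVclosed : IsClosed (V : Set E) := Submodule.closed_of_finiteDimensional V
  have hKcomp : IsCompact ((V : Set E) ∩ Metric.closedBall 0 R) :=
    (isCompact_closedBall 0 R).inter_left hVclosed
  have h0K : (0 : E) ∈ (V : Set E) ∩ Metric.closedBall 0 R :=
    ⟨V.zero_mem, Metric.mem_closedBall_self hR⟩
  obtain ⟨bst, hbstK, hbstmin⟩ := hKcomp.exists_isMinOn ⟨0, h0K⟩ hcont.continuousOn
  refine ⟨bst, hbstK.1, fun b hbV => ?_⟩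
  by_cases hb : ‖b‖ ≤ R
  · exact hbstmin ⟨hbV, by rwa [Metric.mem_closedBall, dist_zero_right]⟩
  · calc g bst ≤ g 0 := hbstmin h0K
      _ ≤ C := hg0
      _ ≤ g b := hcoer b hbV (le_of_not_ge hb)

set_option maxHeartbeats 2000000 in
lemma aux_min {n p k : ℕ} (X : Matrix (Fin n) (Fin p) ℝ) (y : EuclideanSpace ℝ (Fin n))
    (lam : ℝ) (hlam : 0 < lam) (u : Fin (k + 1) → EuclideanSpace ℝ (Fin p)) (hu : u 0 = 0) :
    ∀ (m : ℕ) (V : Submodule ℝ (EuclideanSpace ℝ (Fin p))), Module.finrank ℝ V ≤ m →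
    ∀ (s : Finset (Fin (k + 1))) (h0 : (0 : Fin (k + 1)) ∈ s),
    ∃ bs ∈ V, ∀ b ∈ V,
      (1/2) * ‖y - toEuc (X.mulVec bs)‖^2 + lam * s.sup' ⟨0, h0⟩ (fun i => ⟪u i, bs⟫)
        ≤ (1/2) * ‖y - toEuc (X.mulVec b)‖^2 + lam * s.sup' ⟨0, h0⟩ (fun i => ⟪u i, b⟫) := by
  intro m
  induction m with
  | zero =>
    intro V hV s h0
    have hVbot : V = ⊥ := Submodule.finrank_eq_zero.mp (Nat.le_zero.mp hV)
    refine ⟨0, V.zero_mem, fun b hb => ?_⟩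
    have : b = 0 := by rw [hVbot] at hb; simpa using hb
    rw [this]
  | succ m ih =>
    intro V hV s h0
    classical
    by_cases hd : ∃ d ∈ V, d ≠ 0 ∧ toEuc (X.mulVec d) = 0 ∧ ∀ i ∈ s, ⟪u i, d⟫ ≤ 0
    · -- recession direction: reduce dimension
      obtain ⟨d, hdV, hdne, hXd, hud⟩ := hd
      set s' := s.filter (fun i => ⟪u i, d⟫ = 0) with hs'def
      have h0' : (0 : Fin (k+1)) ∈ s' :=
        Finset.mem_filter.mpr ⟨h0, by rw [hu]; exact inner_zero_left d⟩
      have hs'sub : s' ⊆ s := Finset.filter_subset _ _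
      set V' := V ⊓ (ℝ ∙ d)ᗮ with hV'def
      have hrank : Module.finrank ℝ V' ≤ m := by
        have hlt : Module.finrank ℝ V' < Module.finrank ℝ V := by
          apply Submodule.finrank_lt_finrank_of_lt
          constructor
          · exact inf_le_left
          · intro hle
            have h1 : d ∈ (ℝ ∙ d)ᗮ := ((le_inf_iff.mp hle).2) hdV
            have h2 : ⟪d, d⟫ = 0 := Submodule.mem_orthogonal_singleton_iff_inner_right.mp h1
            exact hdne (inner_self_eq_zero.mp h2)
        omega
      obtain ⟨bs, hbsV', hbsmin⟩ := ih V' hrank s' h0'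
      have hbsV : bs ∈ V := (Submodule.mem_inf.mp hbsV').1
      set M := s'.sup' ⟨0, h0'⟩ (fun i => ⟪u i, bs⟫) with hMdef
      set T := s.sup' ⟨0, h0⟩ (fun i => (⟪u i, bs⟫ - M) / (-⟪u i, d⟫)) with hTdef
      refine ⟨bs + T • d, V.add_mem hbsV (V.smul_mem T hdV), fun b hb => ?_⟩
      have hXLd : XL X d = 0 := hXd
      -- (B) X part of bs + T • d
      have hXbst : toEuc (X.mulVec (bs + T • d)) = toEuc (X.mulVec bs) := by
        have : XL X (bs + T • d) = XL X bs := by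
          rw [map_add, map_smul, hXLd, smul_zero, add_zero]
        exact this
      -- (A) sup over s at bs + T • d equals M
      have hMeq : s.sup' ⟨0, h0⟩ (fun i => ⟪u i, bs + T • d⟫) = M := by
        apply le_antisymm
        · apply Finset.sup'_le
          intro i hi
          rw [inner_add_right, real_inner_smul_right]
          by_cases hi' : i ∈ s'
          · have hz : ⟪u i, d⟫ = 0 := (Finset.mem_filter.mp hi').2
            rw [hz, mul_zero, add_zero]
            exact Finset.le_sup' (fun j => ⟪u j, bs⟫) hi'
          · have hneg : ⟪u i, d⟫ < 0 := by
              have hle := hud i hi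
              rcases lt_or_eq_of_le hle with h | h
              · exact h
              · exact absurd (Finset.mem_filter.mpr ⟨hi, h⟩) hi'
            have hT : (⟪u i, bs⟫ - M) / (-⟪u i, d⟫) ≤ T :=
              Finset.le_sup' (fun j => (⟪u j, bs⟫ - M) / (-⟪u j, d⟫)) hi
            have := (div_le_iff₀ (by linarith : (0:ℝ) < -⟪u i, d⟫)).mp hT
            nlinarith
        · apply Finset.sup'_le
          intro i hi'
          have hz : ⟪u i, d⟫ = 0 := (Finset.mem_filter.mp hi').2
          have : ⟪u i, bs⟫ = ⟪u i, bs + T • d⟫ := by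
            rw [inner_add_right, real_inner_smul_right, hz, mul_zero, add_zero]
          rw [this]
          exact Finset.le_sup' (fun j => ⟪u j, bs + T • d⟫) (hs'sub hi')
      -- (C) decompose b
      set c' := ⟪d, b⟫ / ⟪d, d⟫ with hc'def
      set b' := b - c' • d with hb'def
      have hdd : ⟪d, d⟫ ≠ 0 := inner_self_ne_zero.mpr hdne
      have hb'V' : b' ∈ V' := by
        apply Submodule.mem_inf.mpr
        constructor
        · exact V.sub_mem hb (V.smul_mem c' hdV)
        · apply Submodule.mem_orthogonal_singleton_iff_inner_right.mpr
          rw [inner_sub_right, real_inner_smul_right, hc'def,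
            div_mul_cancel₀ _ hdd, sub_self]
      have hXb' : toEuc (X.mulVec b') = toEuc (X.mulVec b) := by
        have : XL X b' = XL X b := by
          rw [hb'def, map_sub, map_smul, hXLd, smul_zero, sub_zero]
        exact this
      have hsup' : ∀ i ∈ s', ⟪u i, b'⟫ = ⟪u i, b⟫ := by
        intro i hi'
        have hz : ⟪u i, d⟫ = 0 := (Finset.mem_filter.mp hi').2
        rw [hb'def, inner_sub_right, real_inner_smul_right, hz, mul_zero, sub_zero]
      have hsupeq : s'.sup' ⟨0, h0'⟩ (fun i => ⟪u i, b'⟫)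
          = s'.sup' ⟨0, h0'⟩ (fun i => ⟪u i, b⟫) :=
        Finset.sup'_congr _ rfl hsup'
      have hsuple : s'.sup' ⟨0, h0'⟩ (fun i => ⟪u i, b⟫) ≤ s.sup' ⟨0, h0⟩ (fun i => ⟪u i, b⟫) := by
        apply Finset.sup'_le
        intro i hi'
        exact Finset.le_sup' (fun j => ⟪u j, b⟫) (hs'sub hi')
      calc (1/2) * ‖y - toEuc (X.mulVec (bs + T • d))‖^2
            + lam * s.sup' ⟨0, h0⟩ (fun i => ⟪u i, bs + T • d⟫)
          = (1/2) * ‖y - toEuc (X.mulVec bs)‖^2 + lam * M := by rw [hXbst, hMeq]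
        _ ≤ (1/2) * ‖y - toEuc (X.mulVec b')‖^2
            + lam * s'.sup' ⟨0, h0'⟩ (fun i => ⟪u i, b'⟫) := hbsmin b' hb'V'
        _ = (1/2) * ‖y - toEuc (X.mulVec b)‖^2
            + lam * s'.sup' ⟨0, h0'⟩ (fun i => ⟪u i, b⟫) := by rw [hXb', hsupeq]
        _ ≤ (1/2) * ‖y - toEuc (X.mulVec b)‖^2
            + lam * s.sup' ⟨0, h0⟩ (fun i => ⟪u i, b⟫) := by
              have := mul_le_mul_of_nonneg_left hsuple hlam.le
              linarith
    · -- coercive case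
      push_neg at hd
      set N : EuclideanSpace ℝ (Fin p) → ℝ :=
        fun b => ‖toEuc (X.mulVec b)‖ + s.sup' ⟨0, h0⟩ (fun i => ⟪u i, b⟫) with hNdef
      have hinner_cont : ∀ i : Fin (k+1), Continuous (fun b : EuclideanSpace ℝ (Fin p) => ⟪u i, b⟫) :=
        fun i => continuous_const.inner continuous_id
      have hXcont : Continuous (fun b : EuclideanSpace ℝ (Fin p) => toEuc (X.mulVec b)) :=
        (XL X).continuous_of_finiteDimensional
      have hsupcont : Continuous (fun b : EuclideanSpace ℝ (Fin p) =>
          s.sup' ⟨0, h0⟩ (fun i => ⟪u i, b⟫)) :=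
        Continuous.finset_sup'_apply ⟨0, h0⟩ (fun i _ => hinner_cont i)
      have hsup0 : ∀ b, (0:ℝ) ≤ s.sup' ⟨0, h0⟩ (fun i => ⟪u i, b⟫) := by
        intro b
        have h1 : ⟪u 0, b⟫ = 0 := by rw [hu]; exact inner_zero_left b
        calc (0:ℝ) = ⟪u 0, b⟫ := h1.symm
          _ ≤ _ := Finset.le_sup' (fun i => ⟪u i, b⟫) h0
      have hX0 : toEuc (X.mulVec (0 : EuclideanSpace ℝ (Fin p))) = 0 := map_zero (XL X)
      have hsupz : s.sup' ⟨0, h0⟩ (fun i => ⟪u i, (0 : EuclideanSpace ℝ (Fin p))⟫) = 0 := by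
        rw [show (fun i => ⟪u i, (0 : EuclideanSpace ℝ (Fin p))⟫) = fun _ => (0:ℝ) from
          funext fun i => inner_zero_right (u i)]
        exact Finset.sup'_const _ _
      have hNpos : ∀ b ∈ V, b ≠ 0 → 0 < N b := by
        intro b hbV hb0
        by_cases hXb : toEuc (X.mulVec b) = 0
        · obtain ⟨i, his, hipos⟩ := hd b hbV hb0 hXb
          have h1 : ⟪u i, b⟫ ≤ s.sup' ⟨0, h0⟩ (fun j => ⟪u j, b⟫) :=
            Finset.le_sup' (fun j => ⟪u j, b⟫) his
          have h2 : (0:ℝ) ≤ ‖toEuc (X.mulVec b)‖ := norm_nonneg _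
          have : 0 < N b := by rw [hNdef]; dsimp only; linarith
          exact this
        · have h1 : 0 < ‖toEuc (X.mulVec b)‖ := norm_pos_iff.mpr hXb
          have h2 := hsup0 b
          rw [hNdef]; dsimp only; linarith
      by_cases hVtriv : ∀ b ∈ V, b = (0 : EuclideanSpace ℝ (Fin p))
      · exact ⟨0, V.zero_mem, fun b hb => by rw [hVtriv b hb]⟩
      push_neg at hVtriv
      obtain ⟨v, hvV, hv0⟩ := hVtriv
      have hVclosed : IsClosed (V : Set (EuclideanSpace ℝ (Fin p))) :=
        Submodule.closed_of_finiteDimensional V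
      have hScomp : IsCompact ((V : Set (EuclideanSpace ℝ (Fin p))) ∩ Metric.sphere 0 1) :=
        (isCompact_sphere 0 1).inter_left hVclosed
      have hSne : ((V : Set (EuclideanSpace ℝ (Fin p))) ∩ Metric.sphere 0 1).Nonempty :=
        ⟨‖v‖⁻¹ • v, V.smul_mem _ hvV,
          by rw [mem_sphere_zero_iff_norm]; exact norm_smul_inv_norm hv0⟩
      have hNcont : Continuous N := (hXcont.norm).add hsupcont
      obtain ⟨d0, hd0S, hd0min⟩ := hScomp.exists_isMinOn hSne hNcont.continuousOn
      set c := N d0 with hcdef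
      have hd0norm : ‖d0‖ = (1:ℝ) := mem_sphere_zero_iff_norm.mp hd0S.2
      have hc : 0 < c := hNpos d0 hd0S.1 (by
        intro h; rw [h, norm_zero] at hd0norm; exact one_ne_zero hd0norm.symm)
      have hNlow : ∀ b ∈ V, c * ‖b‖ ≤ N b := by
        intro b hbV
        by_cases hb0 : b = 0
        · rw [hb0, hNdef]; dsimp only
          rw [hX0, hsupz, norm_zero, norm_zero, mul_zero, add_zero]
        · have hnb : (0:ℝ) < ‖b‖ := norm_pos_iff.mpr hb0
          have hmem : ‖b‖⁻¹ • b ∈ (V : Set (EuclideanSpace ℝ (Fin p))) ∩ Metric.sphere 0 1 :=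
            ⟨V.smul_mem _ hbV, by rw [mem_sphere_zero_iff_norm]; exact norm_smul_inv_norm hb0⟩
          have h1 : c ≤ N (‖b‖⁻¹ • b) := hd0min hmem
          have hscale : N (‖b‖⁻¹ • b) = ‖b‖⁻¹ * N b := by
            rw [hNdef]; dsimp only
            have hX : toEuc (X.mulVec ((‖b‖⁻¹ • b : EuclideanSpace ℝ (Fin p)))) = ‖b‖⁻¹ • toEuc (X.mulVec b) :=
              map_smul (XL X) _ _
            have hsupsc : s.sup' ⟨0, h0⟩ (fun i => ⟪u i, ‖b‖⁻¹ • b⟫)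
                = ‖b‖⁻¹ * s.sup' ⟨0, h0⟩ (fun i => ⟪u i, b⟫) := by
              rw [← sup'_mul_left s ⟨0, h0⟩ (fun i => ⟪u i, b⟫) _ (inv_nonneg.mpr hnb.le)]
              exact Finset.sup'_congr _ rfl (fun i _ => real_inner_smul_right _ _ _)
            rw [hX, hsupsc, norm_smul, Real.norm_eq_abs, abs_of_nonneg (inv_nonneg.mpr hnb.le)]
            ring
          rw [hscale] at h1
          calc c * ‖b‖ ≤ (‖b‖⁻¹ * N b) * ‖b‖ := mul_le_mul_of_nonneg_right h1 hnb.le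
            _ = N b := by field_simp
      set C : ℝ := (1/2) * ‖y‖^2 with hCdef
      have hCnn : (0:ℝ) ≤ C := by positivity
      set R : ℝ := max ((2/c) * (‖y‖ + Real.sqrt (2*C))) (max ((2*C)/(c*lam)) 0) with hRdef
      have hR0 : (0:ℝ) ≤ R := le_max_of_le_right (le_max_right _ _)
      clear_value N c C R
      apply exists_min_on_submodule V _
        (Continuous.add (continuous_const.mul ((continuous_const.sub hXcont).norm.pow 2))
          (continuous_const.mul hsupcont)) C R hR0
      · -- g 0 ≤ C
        dsimp only
        simp only [Pi.add_apply, Pi.mul_apply, Pi.pow_apply, Pi.sub_apply]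
        rw [hX0, hsupz, mul_zero, add_zero, sub_zero, hCdef]
      · -- coercivity
        intro b hbV hRb
        dsimp only
        simp only [Pi.add_apply, Pi.mul_apply, Pi.pow_apply, Pi.sub_apply]
        rw [hRdef] at hRb
        have hN : c * ‖b‖ ≤ ‖toEuc (X.mulVec b)‖ + s.sup' ⟨0, h0⟩ (fun i => ⟪u i, b⟫) := by
          have h := hNlow b hbV; rw [hNdef] at h; exact h
        have hsupb := hsup0 b
        by_cases hcase : c/2 * ‖b‖ ≤ s.sup' ⟨0, h0⟩ (fun i => ⟪u i, b⟫)
        · have h1 : (2*C)/(c*lam) ≤ ‖b‖ := le_trans (le_max_of_le_right (le_max_left _ _)) hRb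
          have hclam : (0:ℝ) < c * lam := mul_pos hc hlam
          have h3 : 2*C ≤ c*lam*‖b‖ := by
            rw [div_le_iff₀ hclam] at h1; linarith
          have h4 : lam * (c/2 * ‖b‖) ≤ lam * s.sup' ⟨0, h0⟩ (fun i => ⟪u i, b⟫) :=
            mul_le_mul_of_nonneg_left hcase hlam.le
          have h5 : lam * (c/2 * ‖b‖) = c*lam*‖b‖/2 := by ring
          have hqnn : (0:ℝ) ≤ (1/2) * ‖y - toEuc (X.mulVec b)‖^2 := by positivity
          linarith
        · push_neg at hcase
          have hXbig : c/2 * ‖b‖ ≤ ‖toEuc (X.mulVec b)‖ := by linarith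
          have h1 : (2/c) * (‖y‖ + Real.sqrt (2*C)) ≤ ‖b‖ := le_trans (le_max_left _ _) hRb
          have hsq : Real.sqrt (2*C) ^ 2 = 2*C := Real.sq_sqrt (by linarith)
          have hsqnn : (0:ℝ) ≤ Real.sqrt (2*C) := Real.sqrt_nonneg _
          have heq : c/2 * ((2/c) * (‖y‖ + Real.sqrt (2*C))) = ‖y‖ + Real.sqrt (2*C) := by
            field_simp
          have h2 : ‖y‖ + Real.sqrt (2*C) ≤ c/2 * ‖b‖ :=
            calc ‖y‖ + Real.sqrt (2*C) = c/2 * ((2/c) * (‖y‖ + Real.sqrt (2*C))) := heq.symm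
              _ ≤ c/2 * ‖b‖ := mul_le_mul_of_nonneg_left h1 (by positivity)
          have htri : ‖toEuc (X.mulVec b)‖ - ‖y‖ ≤ ‖y - toEuc (X.mulVec b)‖ := by
            have h5 := norm_sub_norm_le (toEuc (X.mulVec b)) y
            have h6 : ‖toEuc (X.mulVec b) - y‖ = ‖y - toEuc (X.mulVec b)‖ := norm_sub_rev _ _
            linarith
          have h3 : Real.sqrt (2*C) ≤ ‖y - toEuc (X.mulVec b)‖ := by linarith
          have h4 : 2*C ≤ ‖y - toEuc (X.mulVec b)‖^2 := by nlinarith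
          have h5 : (0:ℝ) ≤ lam * s.sup' ⟨0, h0⟩ (fun i => ⟪u i, b⟫) :=
            mul_nonneg hlam.le hsupb
          linarith

/-- The function `f(b) = (1/2)‖y − Xb‖₂² + λ·pen(b)` attains its infimum
over `ℝ^p`: there exists a minimizer. -/
theorem minimizer_exists {n p k : ℕ}
    (X : Matrix (Fin n) (Fin p) ℝ) (y : EuclideanSpace ℝ (Fin n))
    (lam : ℝ) (hlam : 0 < lam)
    (u : Fin (k + 1) → EuclideanSpace ℝ (Fin p)) (hu : u 0 = 0)
    (pen : EuclideanSpace ℝ (Fin p) → ℝ)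
    (hpen : ∀ x, pen x = Finset.univ.sup' Finset.univ_nonempty fun i => ⟪u i, x⟫) :
    ∃ bstar : EuclideanSpace ℝ (Fin p), ∀ b : EuclideanSpace ℝ (Fin p),
      (1/2) * ‖y - toEuc (X.mulVec bstar)‖^2 + lam * pen bstar
        ≤ (1/2) * ‖y - toEuc (X.mulVec b)‖^2 + lam * pen b := by
  obtain ⟨bs, -, hmin⟩ := aux_min X y lam hlam u hu p ⊤
    (le_of_eq (by rw [finrank_top, finrank_euclideanSpace_fin]))
    Finset.univ (Finset.mem_univ 0)
  refine ⟨bs, fun b => ?_⟩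
  rw [hpen, hpen]
  exact hmin b Submodule.mem_top
end
end

section
/- Let X ∈ ℝ^{n×p}, λ > 0, β ∈ ℝ^p, ε ∈ ℝ^n, and let pen be a real-valued polyhedral gauge on ℝ^p (pen(b) = max{⟨u_1,b⟩,…,⟨u_k,b⟩} with u_1 = 0). Assume uniform uniqueness: for every y ∈ ℝ^n the set S_{X,λpen}(y) is a singleton {β̂(y)}. Assume the pattern of β is accessible, i.e. row(X) ∩ ∂pen(β) ≠ ∅. For r ∈ ℕ set y^(r) = X(rβ) + ε. Then β̂(y^(r))/r converges to β as r → ∞. -/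
open scoped RealInnerProductSpace

noncomputable section

section MyAux
variable {n p : ℕ} (X : Matrix (Fin n) (Fin p) ℝ)

lemma myL_map_add (a b : EuclideanSpace ℝ (Fin p)) :
    toEuc (X.mulVec (a + b)) = toEuc (X.mulVec a) + toEuc (X.mulVec b) := by
  ext j
  simp [toEuc, Matrix.mulVec, dotProduct, WithLp.equiv_symm_apply, PiLp.toLp_apply,
    PiLp.add_apply, mul_add, Finset.sum_add_distrib]

def Lmap : EuclideanSpace ℝ (Fin p) →ₗ[ℝ] EuclideanSpace ℝ (Fin n) where
  toFun := fun c => toEuc (X.mulVec c)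
  map_add' := myL_map_add X
  map_smul' := fun r a => by
    ext j
    simp [toEuc, Matrix.mulVec, dotProduct, WithLp.equiv_symm_apply, PiLp.toLp_apply,
      PiLp.smul_apply, smul_eq_mul, Finset.mul_sum]
    exact Finset.sum_congr rfl fun i _ => by ring

lemma myL_cont : Continuous (fun c : EuclideanSpace ℝ (Fin p) => toEuc (X.mulVec c)) :=
  (Lmap X).continuous_of_finiteDimensional

lemma myL_sub (a b : EuclideanSpace ℝ (Fin p)) :
    toEuc (X.mulVec (a - b)) = toEuc (X.mulVec a) - toEuc (X.mulVec b) :=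
  (Lmap X).map_sub a b

lemma myL_smul (r : ℝ) (a : EuclideanSpace ℝ (Fin p)) :
    toEuc (X.mulVec (r • a)) = r • toEuc (X.mulVec a) :=
  (Lmap X).map_smul r a

lemma my_adj_inner (w : EuclideanSpace ℝ (Fin n)) (d : EuclideanSpace ℝ (Fin p)) :
    ⟪toEuc (X.transpose.mulVec w), d⟫ = ⟪w, toEuc (X.mulVec d)⟫ := by
  simp only [toEuc, PiLp.inner_apply, RCLike.inner_apply, conj_trivial,
    WithLp.equiv_symm_apply, PiLp.toLp_apply, Matrix.mulVec, dotProduct, Matrix.transpose_apply,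
    Finset.sum_mul, Finset.mul_sum]
  rw [Finset.sum_comm]
  exact Finset.sum_congr rfl fun i _ => Finset.sum_congr rfl fun j _ => by ring

end MyAux

section PenAux
variable {p k : ℕ} (u : Fin (k + 1) → EuclideanSpace ℝ (Fin p))
  (pen : EuclideanSpace ℝ (Fin p) → ℝ)
  (hu : u 0 = 0)
  (hpen : ∀ x, pen x = Finset.univ.sup' Finset.univ_nonempty fun i => ⟪u i, x⟫)

include hpen

include hu in
lemma my_pen_nonneg (x : EuclideanSpace ℝ (Fin p)) : 0 ≤ pen x := by
  rw [hpen]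
  have := Finset.le_sup' (fun i => ⟪u i, x⟫) (Finset.mem_univ (0 : Fin (k+1)))
  simp only [hu, inner_zero_left] at this
  exact this

lemma my_pen_smul (r : ℝ) (hr : 0 ≤ r) (x : EuclideanSpace ℝ (Fin p)) :
    pen (r • x) = r * pen x := by
  rw [hpen, hpen]
  have : (fun i => ⟪u i, r • x⟫) = fun i => r * ⟪u i, x⟫ :=
    funext fun i => real_inner_smul_right _ _ _
  rw [this]
  exact (Finset.comp_sup'_eq_sup'_comp _ (fun t => r * t)
    (fun a b => mul_max_of_nonneg a b hr)).symm

lemma my_pen_add_le (x y : EuclideanSpace ℝ (Fin p)) : pen (x + y) ≤ pen x + pen y := by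
  rw [hpen, hpen, hpen]
  apply Finset.sup'_le
  intro i _
  rw [inner_add_right]
  exact add_le_add (Finset.le_sup' (fun i => ⟪u i, x⟫) (Finset.mem_univ i))
    (Finset.le_sup' (fun i => ⟪u i, y⟫) (Finset.mem_univ i))

lemma my_pen_cont : Continuous pen := by
  set C : ℝ := Finset.univ.sup' Finset.univ_nonempty fun i => ‖u i‖ with hC
  have key : ∀ x y : EuclideanSpace ℝ (Fin p), pen x ≤ pen y + C * ‖x - y‖ := by
    intro x y
    rw [hpen x]
    apply Finset.sup'_le
    intro i _
    have h1 : ⟪u i, x⟫ = ⟪u i, y⟫ + ⟪u i, x - y⟫ := by rw [inner_sub_right]; ring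
    have h2 : ⟪u i, y⟫ ≤ pen y := by
      rw [hpen y]; exact Finset.le_sup' (fun i => ⟪u i, y⟫) (Finset.mem_univ i)
    have h3 : ⟪u i, x - y⟫ ≤ C * ‖x - y‖ := by
      calc ⟪u i, x - y⟫ ≤ ‖u i‖ * ‖x - y‖ := real_inner_le_norm _ _
        _ ≤ C * ‖x - y‖ := by
            apply mul_le_mul_of_nonneg_right _ (norm_nonneg _)
            exact Finset.le_sup' (fun i => ‖u i‖) (Finset.mem_univ i)
    linarith
  have lip : LipschitzWith (Real.toNNReal C) pen := by
    apply LipschitzWith.of_dist_le_mul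
    intro x y
    rw [Real.dist_eq, dist_eq_norm, abs_sub_le_iff]
    have hCle : C ≤ (Real.toNNReal C : ℝ) := by
      rw [Real.coe_toNNReal']
      exact le_max_left _ _
    have hrev : ‖y - x‖ = ‖x - y‖ := norm_sub_rev y x
    have hmul := mul_le_mul_of_nonneg_right hCle (norm_nonneg (x - y))
    constructor
    · have := key x y
      linarith
    · have := key y x
      rw [hrev] at this
      linarith
  exact lip.continuous

end PenAux

lemma my_mem_Smin {n p : ℕ} (X : Matrix (Fin n) (Fin p) ℝ) (lam : ℝ) (hlam : 0 < lam)
    (pen : EuclideanSpace ℝ (Fin p) → ℝ)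
    (y : EuclideanSpace ℝ (Fin n)) (b : EuclideanSpace ℝ (Fin p))
    (z : EuclideanSpace ℝ (Fin n))
    (hz : toEuc (X.transpose.mulVec z) ∈ subdiff pen b)
    (hy : y - toEuc (X.mulVec b) = lam • z) :
    b ∈ Smin X lam pen y := by
  intro b'0
  set b' : EuclideanSpace ℝ (Fin p) := b'0 with hb'
  show (1/2) * ‖y - toEuc (X.mulVec b)‖^2 + lam * pen b
      ≤ (1/2) * ‖y - toEuc (X.mulVec b')‖^2 + lam * pen b'
  have hdecomp : y - toEuc (X.mulVec b')
      = (y - toEuc (X.mulVec b)) - toEuc (X.mulVec (b' - b)) := by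
    rw [myL_sub]; abel
  have hexp := norm_sub_sq_real (y - toEuc (X.mulVec b)) (toEuc (X.mulVec (b' - b)))
  have hinner : ⟪y - toEuc (X.mulVec b), toEuc (X.mulVec (b' - b))⟫
      = lam * ⟪toEuc (X.transpose.mulVec z), b' - b⟫ := by
    rw [hy, my_adj_inner, WithLp.ofLp_sub, real_inner_smul_left]
  have hsub := hz b'
  have h4 : lam * ⟪toEuc (X.transpose.mulVec z), b' - b⟫ ≤ lam * (pen b' - pen b) :=
    mul_le_mul_of_nonneg_left (by linarith) hlam.le
  rw [hdecomp, hexp, hinner]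
  nlinarith [sq_nonneg ‖toEuc (X.mulVec (b' - b))‖]


set_option maxHeartbeats 1000000 in
/-- Under uniform uniqueness and accessibility of the pattern of `β`, for
`y⁽ʳ⁾ = X(rβ) + ε`, the rescaled estimator `β̂(y⁽ʳ⁾)/r` converges to `β` as `r → ∞`. -/
theorem rescaled_estimator_tendsto {n p k : ℕ}
    (X : Matrix (Fin n) (Fin p) ℝ) (lam : ℝ) (hlam : 0 < lam)
    (u : Fin (k + 1) → EuclideanSpace ℝ (Fin p)) (hu : u 0 = 0)
    (pen : EuclideanSpace ℝ (Fin p) → ℝ)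
    (hpen : ∀ x, pen x = Finset.univ.sup' Finset.univ_nonempty fun i => ⟪u i, x⟫)
    (β : EuclideanSpace ℝ (Fin p)) (ε : EuclideanSpace ℝ (Fin n))
    (betahat : EuclideanSpace ℝ (Fin n) → EuclideanSpace ℝ (Fin p))
    (huniq : ∀ y, Smin X lam pen y = {betahat y})
    (hacc : (rowSpace X ∩ subdiff pen β).Nonempty) :
    Filter.Tendsto
      (fun r : ℕ => ((r : ℝ))⁻¹ • betahat (toEuc (X.mulVec ((r : ℝ) • β)) + ε))
      Filter.atTop (nhds β) := by
  classical
  rcases Nat.eq_zero_or_pos p with hp0 | hp0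
  · subst hp0
    haveI : Subsingleton (EuclideanSpace ℝ (Fin 0)) :=
      ⟨fun a b => PiLp.ext fun i => i.elim0⟩
    have heq : (fun r : ℕ => ((r : ℝ))⁻¹ • betahat (toEuc (X.mulVec ((r : ℝ) • β)) + ε))
        = fun _ => β := funext fun r => Subsingleton.elim _ _
    rw [heq]
    exact tendsto_const_nhds
  obtain ⟨s, hsrow, hsβ⟩ := hacc
  obtain ⟨z, rfl⟩ := hsrow
  have hpen0 : ∀ x, 0 ≤ pen x := fun x => my_pen_nonneg u pen hu hpen x
  have hpensmul : ∀ (r : ℝ), 0 ≤ r → ∀ x, pen (r • x) = r * pen x :=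
    fun r hr x => my_pen_smul u pen hpen r hr x
  have hpenadd : ∀ x y, pen (x + y) ≤ pen x + pen y :=
    fun x y => my_pen_add_le u pen hpen x y
  have hpencont : Continuous pen := my_pen_cont u pen hpen
  have hLcont := myL_cont X
  have hmem : ∀ y, betahat y ∈ Smin X lam pen y := fun y => by
    rw [huniq y]; exact Set.mem_singleton _
  -- subgradient inequality in adjoint form
  have hsβ' : ∀ b : EuclideanSpace ℝ (Fin p), pen β + ⟪z, toEuc (X.mulVec b) - toEuc (X.mulVec β)⟫ ≤ pen b := by
    intro b
    have h := hsβ b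
    rwa [my_adj_inner, WithLp.ofLp_sub, myL_sub] at h
  -- uniqueness of the limit point
  have hpt : ∀ x : EuclideanSpace ℝ (Fin p), toEuc (X.mulVec x) = toEuc (X.mulVec β) → pen x = pen β → x = β := by
    intro x hx hpx
    have hyβ : (toEuc (X.mulVec β) + lam • z) - toEuc (X.mulVec β) = lam • z :=
      add_sub_cancel_left _ _
    have hβmem : β ∈ Smin X lam pen (toEuc (X.mulVec β) + lam • z) :=
      my_mem_Smin X lam hlam pen _ β z hsβ hyβ
    have hzx : toEuc (X.transpose.mulVec z) ∈ subdiff pen x := by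
      intro b
      have h1 := hsβ b
      have h2 : ⟪toEuc (X.transpose.mulVec z), x - β⟫ = 0 := by
        rw [my_adj_inner, WithLp.ofLp_sub, myL_sub, hx, sub_self, inner_zero_right]
      have h3 : ⟪toEuc (X.transpose.mulVec z), b - x⟫
          = ⟪toEuc (X.transpose.mulVec z), b - β⟫ - ⟪toEuc (X.transpose.mulVec z), x - β⟫ := by
        rw [← inner_sub_right]
        congr 1
        abel
      rw [hpx, h3, h2]
      linarith
    have hxmem : x ∈ Smin X lam pen (toEuc (X.mulVec β) + lam • z) := by
      apply my_mem_Smin X lam hlam pen _ x z hzx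
      rw [hx]
      exact hyβ
    rw [huniq] at hβmem hxmem
    exact (Set.mem_singleton_iff.mp hxmem).trans (Set.mem_singleton_iff.mp hβmem).symm
  -- trivial kernel
  have hker : ∀ v : EuclideanSpace ℝ (Fin p),
      toEuc (X.mulVec v) = 0 → pen v = 0 → v = 0 := by
    intro v hv hpv
    have hb0 : betahat 0 ∈ Smin X lam pen 0 := hmem 0
    have hL2 : toEuc (X.mulVec (betahat 0 + v)) = toEuc (X.mulVec (betahat 0)) := by
      rw [myL_map_add, hv, add_zero]
    have hp2 : pen (betahat 0 + v) ≤ pen (betahat 0) := by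
      have := hpenadd (betahat 0) v
      rw [hpv] at this
      linarith
    have hmem2 : betahat 0 + v ∈ Smin X lam pen 0 := by
      intro b'0
      have step1 : (1/2) * ‖(0 : EuclideanSpace ℝ (Fin n)) - toEuc (X.mulVec (betahat 0 + v))‖^2
            + lam * pen (betahat 0 + v)
          ≤ (1/2) * ‖(0 : EuclideanSpace ℝ (Fin n)) - toEuc (X.mulVec (betahat 0))‖^2
            + lam * pen (betahat 0) := by
        rw [hL2]
        exact add_le_add le_rfl (mul_le_mul_of_nonneg_left hp2 hlam.le)
      exact le_trans step1 (hb0 b'0)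
    rw [huniq] at hmem2
    exact add_eq_left.mp (Set.mem_singleton_iff.mp hmem2)
  -- positive lower bound on the unit sphere
  have he1 : ‖EuclideanSpace.single (⟨0, hp0⟩ : Fin p) (1:ℝ)‖ = 1 := by
    rw [EuclideanSpace.norm_single]
    norm_num
  have hgcont : Continuous (fun c : EuclideanSpace ℝ (Fin p) => ‖toEuc (X.mulVec c)‖ + pen c) :=
    hLcont.norm.add hpencont
  obtain ⟨x₀, hx₀S, hx₀min⟩ :=
    (isCompact_sphere (0 : EuclideanSpace ℝ (Fin p)) 1).exists_isMinOn
      ⟨_, mem_sphere_zero_iff_norm.mpr he1⟩ hgcont.continuousOn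
  set m₀ : ℝ := ‖toEuc (X.mulVec x₀)‖ + pen x₀ with hm₀def
  have hm₀ : 0 < m₀ := by
    rcases (add_nonneg (norm_nonneg (toEuc (X.mulVec x₀))) (hpen0 x₀)).lt_or_eq with h | h
    · exact h
    · exfalso
      have e1 : ‖toEuc (X.mulVec x₀)‖ = 0 := by
        have := hpen0 x₀; have := norm_nonneg (toEuc (X.mulVec x₀)); linarith [h.symm]
      have e2 : pen x₀ = 0 := by
        have := norm_nonneg (toEuc (X.mulVec x₀)); linarith [h.symm]
      have := hker x₀ (norm_eq_zero.mp e1) e2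
      rw [mem_sphere_zero_iff_norm] at hx₀S
      rw [this] at hx₀S
      simp at hx₀S
  have hglow : ∀ v : EuclideanSpace ℝ (Fin p), m₀ * ‖v‖ ≤ ‖toEuc (X.mulVec v)‖ + pen v := by
    intro v
    rcases eq_or_ne v 0 with rfl | hv
    · rw [norm_zero, mul_zero]
      exact add_nonneg (norm_nonneg _) (hpen0 0)
    · have hn : 0 < ‖v‖ := norm_pos_iff.mpr hv
      have hx : (‖v‖⁻¹ • v) ∈ Metric.sphere (0 : EuclideanSpace ℝ (Fin p)) 1 := by
        rw [mem_sphere_zero_iff_norm, norm_smul, norm_inv, norm_norm]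
        field_simp
      have h1 : m₀ ≤ ‖toEuc (X.mulVec (‖v‖⁻¹ • v))‖ + pen (‖v‖⁻¹ • v) := hx₀min hx
      rw [myL_smul, norm_smul, hpensmul _ (inv_nonneg.mpr hn.le), norm_inv, norm_norm] at h1
      have h2 := mul_le_mul_of_nonneg_right h1 hn.le
      have h3 : (‖v‖⁻¹ * ‖toEuc (X.mulVec v)‖ + ‖v‖⁻¹ * pen v) * ‖v‖
          = ‖toEuc (X.mulVec v)‖ + pen v := by
        field_simp
      rw [h3] at h2
      linarith
  -- the rescaled sequence
  obtain ⟨c, hcdef⟩ : ∃ c : ℕ → EuclideanSpace ℝ (Fin p),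
      ∀ r : ℕ, c r = ((r : ℝ))⁻¹ • betahat (toEuc (X.mulVec ((r : ℝ) • β)) + ε) :=
    ⟨_, fun r => rfl⟩
  obtain ⟨w, hwdef⟩ : ∃ w : ℕ → EuclideanSpace ℝ (Fin n),
      ∀ r : ℕ, w r = toEuc (X.mulVec β) + ((r : ℝ))⁻¹ • ε - toEuc (X.mulVec (c r)) :=
    ⟨_, fun r => rfl⟩
  have hgoaleq : (fun r : ℕ => ((r : ℝ))⁻¹ • betahat (toEuc (X.mulVec ((r : ℝ) • β)) + ε))
      = c := funext fun r => (hcdef r).symm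
  rw [hgoaleq]
  have hone : ∀ᶠ r : ℕ in Filter.atTop, 1 ≤ r := Filter.eventually_ge_atTop 1
  have key : ∀ r : ℕ, 1 ≤ r →
      ((r : ℝ))^2 * ((1/2) * ‖w r‖^2) + lam * ((r : ℝ) * pen (c r))
        ≤ (1/2) * ‖ε‖^2 + lam * ((r : ℝ) * pen β) := by
    intro r hr
    have hρ : (1 : ℝ) ≤ (r : ℝ) := by exact_mod_cast hr
    have hρ0 : (0 : ℝ) < (r : ℝ) := by linarith
    have hne : ((r : ℝ)) ≠ 0 := ne_of_gt hρ0
    have hb := hmem (toEuc (X.mulVec ((r : ℝ) • β)) + ε) ((r : ℝ) • β)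
    have hR1 : toEuc (X.mulVec ((r : ℝ) • β)) + ε - toEuc (X.mulVec ((r : ℝ) • β)) = ε :=
      add_sub_cancel_left _ _
    have hbr : betahat (toEuc (X.mulVec ((r : ℝ) • β)) + ε) = (r : ℝ) • c r := by
      rw [hcdef r, smul_inv_smul₀ hne]
    have hLd : toEuc (X.mulVec ((r : ℝ) • β)) + ε - toEuc (X.mulVec ((r : ℝ) • c r))
        = (r : ℝ) • w r := by
      rw [hwdef r]
      simp only [myL_smul, smul_sub, smul_add, smul_inv_smul₀ hne]
    have hnorm : ‖(r : ℝ) • w r‖^2 = (r : ℝ)^2 * ‖w r‖^2 := by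
      rw [norm_smul, mul_pow, Real.norm_eq_abs, sq_abs]
    have hpenc : pen ((r : ℝ) • c r) = (r : ℝ) * pen (c r) := hpensmul _ hρ0.le _
    have hpenβ : pen ((r : ℝ) • β) = (r : ℝ) * pen β := hpensmul _ hρ0.le _
    rw [hbr] at hb
    simp only [WithLp.ofLp_smul] at hb
    rw [hLd, hR1, hnorm, hpenc, hpenβ] at hb
    linarith
  -- consequences
  have hIb : ∀ r : ℕ, 1 ≤ r → ‖w r‖^2 ≤ (‖ε‖^2 + 2*lam*pen β) * ((r : ℝ))⁻¹ := by
    intro r hr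
    have hρ : (1 : ℝ) ≤ (r : ℝ) := by exact_mod_cast hr
    have hρ0 : (0 : ℝ) < (r : ℝ) := by linarith
    have hk := key r hr
    have hq : ‖w r‖^2 * (r : ℝ) ≤ ‖ε‖^2 + 2*lam*pen β := by
      nlinarith [mul_nonneg (mul_nonneg hlam.le hρ0.le) (hpen0 (c r)),
        mul_nonneg hlam.le (hpen0 β), sq_nonneg ‖ε‖, sq_nonneg ‖w r‖]
    rw [← div_eq_mul_inv, le_div_iff₀ hρ0]
    exact hq
  have hIa : ∀ r : ℕ, 1 ≤ r → pen (c r) ≤ pen β + (‖ε‖^2/(2*lam)) * ((r : ℝ))⁻¹ := by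
    intro r hr
    have hρ : (1 : ℝ) ≤ (r : ℝ) := by exact_mod_cast hr
    have hρ0 : (0 : ℝ) < (r : ℝ) := by linarith
    have hk := key r hr
    have h1 : lam * ((r : ℝ) * (pen (c r) - pen β)) ≤ (1/2) * ‖ε‖^2 := by
      nlinarith [mul_nonneg (sq_nonneg (r : ℝ)) (sq_nonneg ‖w r‖)]
    have h2 : pen (c r) - pen β ≤ (1/2)*‖ε‖^2 / (lam * (r : ℝ)) := by
      rw [le_div_iff₀ (mul_pos hlam hρ0)]
      nlinarith [h1]
    have h3 : (‖ε‖^2/(2*lam)) * ((r : ℝ))⁻¹ = (1/2)*‖ε‖^2 / (lam * (r : ℝ)) := by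
      rw [div_mul_eq_mul_div, div_eq_div_iff (by positivity) (by positivity)]
      linear_combination (‖ε‖^2 * lam) * mul_inv_cancel₀ hρ0.ne'
    rw [h3]
    linarith
  have hIc : ∀ r : ℕ, 1 ≤ r →
      ‖toEuc (X.mulVec (c r)) - toEuc (X.mulVec β)‖ ≤ ‖w r‖ + ‖ε‖ * ((r : ℝ))⁻¹ := by
    intro r hr
    have hρ : (1 : ℝ) ≤ (r : ℝ) := by exact_mod_cast hr
    have hρ0 : (0 : ℝ) < (r : ℝ) := by linarith
    have hd : toEuc (X.mulVec (c r)) - toEuc (X.mulVec β) = ((r : ℝ))⁻¹ • ε - w r := by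
      rw [hwdef r]
      abel
    rw [hd]
    calc ‖((r : ℝ))⁻¹ • ε - w r‖ ≤ ‖((r : ℝ))⁻¹ • ε‖ + ‖w r‖ := norm_sub_le _ _
      _ = ‖w r‖ + ‖ε‖ * ((r : ℝ))⁻¹ := by
          rw [norm_smul, Real.norm_eq_abs, abs_of_pos (inv_pos.mpr hρ0)]
          ring
  -- tendsto facts
  have t1 : Filter.Tendsto (fun r : ℕ => ((r : ℝ))⁻¹) Filter.atTop (nhds 0) :=
    tendsto_inv_atTop_nhds_zero_nat
  have hw2 : Filter.Tendsto (fun r : ℕ => ‖w r‖^2) Filter.atTop (nhds 0) := by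
    apply squeeze_zero' (Filter.Eventually.of_forall fun r => sq_nonneg _)
      (hone.mono fun r hr => hIb r hr)
    simpa using t1.const_mul (‖ε‖^2 + 2*lam*pen β)
  have hwn : Filter.Tendsto (fun r : ℕ => ‖w r‖) Filter.atTop (nhds 0) := by
    have h := hw2.sqrt
    have heq : (fun r : ℕ => Real.sqrt (‖w r‖^2)) = fun r : ℕ => ‖w r‖ :=
      funext fun r => Real.sqrt_sq (norm_nonneg _)
    rw [heq] at h
    simpa using h
  have hA : Filter.Tendsto (fun r : ℕ => ‖toEuc (X.mulVec (c r)) - toEuc (X.mulVec β)‖)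
      Filter.atTop (nhds 0) := by
    apply squeeze_zero' (Filter.Eventually.of_forall fun r => norm_nonneg _)
      (hone.mono fun r hr => hIc r hr)
    simpa using hwn.add (t1.const_mul ‖ε‖)
  have hZ : Filter.Tendsto (fun r : ℕ => ⟪z, toEuc (X.mulVec (c r)) - toEuc (X.mulVec β)⟫)
      Filter.atTop (nhds 0) := by
    have hb : ∀ r : ℕ, ‖⟪z, toEuc (X.mulVec (c r)) - toEuc (X.mulVec β)⟫‖
        ≤ ‖z‖ * ‖toEuc (X.mulVec (c r)) - toEuc (X.mulVec β)‖ := fun r => by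
      rw [Real.norm_eq_abs]
      exact abs_real_inner_le_norm z _
    exact squeeze_zero_norm hb (by simpa using hA.const_mul ‖z‖)
  have hPen : Filter.Tendsto (fun r : ℕ => pen (c r)) Filter.atTop (nhds (pen β)) := by
    apply tendsto_of_tendsto_of_tendsto_of_le_of_le'
      (g := fun r : ℕ => pen β + ⟪z, toEuc (X.mulVec (c r)) - toEuc (X.mulVec β)⟫)
      (h := fun r : ℕ => pen β + (‖ε‖^2/(2*lam)) * ((r : ℝ))⁻¹)
    · simpa using tendsto_const_nhds.add hZ
    · simpa using tendsto_const_nhds.add (t1.const_mul (‖ε‖^2/(2*lam)))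
    · exact Filter.Eventually.of_forall fun r => hsβ' (c r)
    · exact hone.mono fun r hr => hIa r hr
  -- the h function
  set hfun : EuclideanSpace ℝ (Fin p) → ℝ := fun x =>
    ‖toEuc (X.mulVec x) - toEuc (X.mulVec β)‖
      + (pen x - pen β - ⟪z, toEuc (X.mulVec x) - toEuc (X.mulVec β)⟫) with hhf
  have hhcont : Continuous hfun := by
    rw [hhf]
    apply Continuous.add
    · exact (hLcont.sub continuous_const).norm
    · exact ((hpencont.sub continuous_const).sub
        (continuous_const.inner (hLcont.sub continuous_const)))
  have hH : Filter.Tendsto (fun r : ℕ => hfun (c r)) Filter.atTop (nhds 0) := by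
    rw [hhf]
    simpa using hA.add (((hPen.sub_const (pen β))).sub hZ)
  have hhnonneg : ∀ x, 0 ≤ hfun x := by
    intro x
    rw [hhf]
    have := hsβ' x
    have := norm_nonneg (toEuc (X.mulVec x) - toEuc (X.mulVec β))
    simp only
    linarith
  have hhzero : ∀ x, hfun x = 0 → x = β := by
    intro x hx0
    rw [hhf] at hx0
    simp only at hx0
    have hge := hsβ' x
    have hn0 : ‖toEuc (X.mulVec x) - toEuc (X.mulVec β)‖ = 0 := by
      have := norm_nonneg (toEuc (X.mulVec x) - toEuc (X.mulVec β))
      linarith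
    have hLx : toEuc (X.mulVec x) = toEuc (X.mulVec β) := by
      have := norm_eq_zero.mp hn0
      exact sub_eq_zero.mp this
    have hinz : ⟪z, toEuc (X.mulVec x) - toEuc (X.mulVec β)⟫ = 0 := by
      rw [hLx, sub_self, inner_zero_right]
    have hpx : pen x = pen β := by
      rw [hinz] at hx0
      linarith
    exact hpt x hLx hpx
  -- eventual norm bound
  set R : ℝ := (‖toEuc (X.mulVec β)‖ + pen β + 1) / m₀ with hR
  have heventB : ∀ᶠ r : ℕ in Filter.atTop, ‖c r‖ ≤ R := by
    have h1 : ∀ᶠ r : ℕ in Filter.atTop,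
        ‖toEuc (X.mulVec (c r)) - toEuc (X.mulVec β)‖ ≤ 1/2 :=
      hA.eventually (eventually_le_nhds (by norm_num))
    have h2 : ∀ᶠ r : ℕ in Filter.atTop, pen (c r) ≤ pen β + 1/2 :=
      hPen.eventually (eventually_le_nhds (by linarith))
    filter_upwards [h1, h2] with r ha hp
    have hLn : ‖toEuc (X.mulVec (c r))‖
        ≤ ‖toEuc (X.mulVec β)‖ + ‖toEuc (X.mulVec (c r)) - toEuc (X.mulVec β)‖ := by
      calc ‖toEuc (X.mulVec (c r))‖
          = ‖toEuc (X.mulVec β) + (toEuc (X.mulVec (c r)) - toEuc (X.mulVec β))‖ := by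
            rw [add_sub_cancel]
        _ ≤ _ := norm_add_le _ _
    have hg := hglow (c r)
    rw [hR, le_div_iff₀ hm₀]
    nlinarith
  -- conclude
  rw [Metric.tendsto_nhds]
  intro δ hδ
  set K : Set (EuclideanSpace ℝ (Fin p)) :=
    Metric.closedBall (0 : EuclideanSpace ℝ (Fin p)) R ∩ {x | δ ≤ dist x β} with hKdef
  have hKc : IsCompact K :=
    (isCompact_closedBall _ _).inter_right
      (isClosed_le continuous_const (continuous_id.dist continuous_const))
  have hhpos : ∀ x ∈ K, 0 < hfun x := by
    intro x hx
    rcases (hhnonneg x).lt_or_eq with h | h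
    · exact h
    · exfalso
      have hxβ := hhzero x h.symm
      have hx2 : δ ≤ dist x β := hx.2
      rw [hxβ, dist_self] at hx2
      linarith
  rcases Set.eq_empty_or_nonempty K with hKe | hKne
  · filter_upwards [heventB] with r hr
    by_contra hcon
    have hxK : c r ∈ K := by
      constructor
      · rw [Metric.mem_closedBall, dist_zero_right]
        exact hr
      · exact not_lt.mp hcon
    rw [hKe] at hxK
    exact Set.notMem_empty _ hxK
  · obtain ⟨x₁, hx₁K, hx₁min⟩ := hKc.exists_isMinOn hKne hhcont.continuousOn
    have hm := hhpos x₁ hx₁K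
    filter_upwards [heventB, hH.eventually (gt_mem_nhds hm)] with r hr hsm
    by_contra hcon
    have hxK : c r ∈ K := by
      constructor
      · rw [Metric.mem_closedBall, dist_zero_right]
        exact hr
      · exact not_lt.mp hcon
    have := hx₁min hxK
    exact absurd (lt_of_le_of_lt this hsm) (lt_irrefl _)
end
end
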